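/- Let n ≥ 2 and let p = (p_1,…,p_n) and s = (s_1,…,s_n) be probability vectors with strictly positive entries. Define q_i(p) = p_i / Σ_{k=i}^{n} p_k and q_{¬i}(p) = (Σ_{k=i+1}^{n} p_k)/(Σ_{k=i}^{n} p_k), and similarly for s, and define the UniCon KL-Divergence UKD(p‖s) = Σ_{i=1}^{n−1} ((n−i+1)/n) · [ q_i(p)·log(q_i(p)/q_i(s)) + q_{¬i}(p)·log(q_{¬i}(p)/q_{¬i}(s)) ]. Then UKD(p‖s) ≥ 0, with equality if and only if p = s. -/

import Mathlib

lemma binKL (a b : ℝ) (ha : 0 < a) (ha1 : a < 1) (hb : 0 < b) (hb1 : b < 1) :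
    0 ≤ a * Real.log (a / b) + (1 - a) * Real.log ((1 - a) / (1 - b)) ∧
    (a * Real.log (a / b) + (1 - a) * Real.log ((1 - a) / (1 - b)) = 0 ↔ a = b) := by
  have h1a : 0 < 1 - a := by linarith
  have h1b : 0 < 1 - b := by linarith
  by_cases hab : a = b
  · subst hab
    simp [div_self ha.ne', div_self h1a.ne']
  · have key : 0 < a * Real.log (a / b) + (1 - a) * Real.log ((1 - a) / (1 - b)) := by
      have hE : a * Real.log (a / b) + (1 - a) * Real.log ((1 - a) / (1 - b)) =
          -(a * Real.log (b / a) + (1 - a) * Real.log ((1 - b) / (1 - a))) := by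
        rw [Real.log_div ha.ne' hb.ne', Real.log_div hb.ne' ha.ne',
            Real.log_div h1a.ne' h1b.ne', Real.log_div h1b.ne' h1a.ne']
        ring
      rw [hE]
      have h1 : Real.log (b / a) < b / a - 1 :=
        Real.log_lt_sub_one_of_pos (div_pos hb ha) (by
          intro h
          exact hab ((div_eq_one_iff_eq ha.ne').mp h).symm)
      have h2 : Real.log ((1 - b) / (1 - a)) ≤ (1 - b) / (1 - a) - 1 :=
        Real.log_le_sub_one_of_pos (div_pos h1b h1a)
      have hlt : a * Real.log (b / a) + (1 - a) * Real.log ((1 - b) / (1 - a)) <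
          a * (b / a - 1) + (1 - a) * ((1 - b) / (1 - a) - 1) := by
        have := mul_lt_mul_of_pos_left h1 ha
        have := mul_le_mul_of_nonneg_left h2 h1a.le
        nlinarith
      have heq : a * (b / a - 1) + (1 - a) * ((1 - b) / (1 - a) - 1) = 0 := by
        field_simp
        ring
      linarith
    exact ⟨key.le, by constructor <;> intro h <;> [linarith; exact absurd h hab]⟩

theorem unicon_kl_nonneg_eq_iff (n : ℕ) (hn : 2 ≤ n) (p s : ℕ → ℝ)
    (hp : ∀ i ∈ Finset.Icc 1 n, 0 < p i)
    (hs : ∀ i ∈ Finset.Icc 1 n, 0 < s i)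
    (hp1 : ∑ i ∈ Finset.Icc 1 n, p i = 1)
    (hs1 : ∑ i ∈ Finset.Icc 1 n, s i = 1) :
    0 ≤ ∑ i ∈ Finset.Icc 1 (n - 1),
        (((n : ℝ) - (i : ℝ) + 1) / (n : ℝ)) *
          ((p i / ∑ k ∈ Finset.Icc i n, p k) *
              Real.log ((p i / ∑ k ∈ Finset.Icc i n, p k) /
                (s i / ∑ k ∈ Finset.Icc i n, s k)) +
            ((∑ k ∈ Finset.Icc (i + 1) n, p k) / ∑ k ∈ Finset.Icc i n, p k) *
              Real.log (((∑ k ∈ Finset.Icc (i + 1) n, p k) / ∑ k ∈ Finset.Icc i n, p k) /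
                ((∑ k ∈ Finset.Icc (i + 1) n, s k) / ∑ k ∈ Finset.Icc i n, s k))) ∧
      ((∑ i ∈ Finset.Icc 1 (n - 1),
          (((n : ℝ) - (i : ℝ) + 1) / (n : ℝ)) *
            ((p i / ∑ k ∈ Finset.Icc i n, p k) *
                Real.log ((p i / ∑ k ∈ Finset.Icc i n, p k) /
                  (s i / ∑ k ∈ Finset.Icc i n, s k)) +
              ((∑ k ∈ Finset.Icc (i + 1) n, p k) / ∑ k ∈ Finset.Icc i n, p k) *
                Real.log (((∑ k ∈ Finset.Icc (i + 1) n, p k) / ∑ k ∈ Finset.Icc i n, p k) /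
                  ((∑ k ∈ Finset.Icc (i + 1) n, s k) / ∑ k ∈ Finset.Icc i n, s k)))) = 0 ↔
        ∀ i ∈ Finset.Icc 1 n, p i = s i) := by
  -- abbreviations
  set P : ℕ → ℝ := fun i => ∑ k ∈ Finset.Icc i n, p k with hP
  set S : ℕ → ℝ := fun i => ∑ k ∈ Finset.Icc i n, s k with hS
  -- positivity of tails
  have hPpos : ∀ i, 1 ≤ i → i ≤ n → 0 < P i := by
    intro i h1 h2
    exact Finset.sum_pos (fun k hk => hp k (by
      simp only [Finset.mem_Icc] at hk ⊢; omega)) (by simp [Finset.nonempty_Icc, h2])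
  have hSpos : ∀ i, 1 ≤ i → i ≤ n → 0 < S i := by
    intro i h1 h2
    exact Finset.sum_pos (fun k hk => hs k (by
      simp only [Finset.mem_Icc] at hk ⊢; omega)) (by simp [Finset.nonempty_Icc, h2])
  -- splitting lemma
  have hsplit : ∀ (f : ℕ → ℝ) i, i ≤ n →
      (∑ k ∈ Finset.Icc i n, f k) = f i + ∑ k ∈ Finset.Icc (i + 1) n, f k := by
    intro f i hin
    have h1 : Finset.Icc i n = insert i (Finset.Ioc i n) := (Finset.Ioc_insert_left hin).symm
    rw [h1, Finset.sum_insert (by simp), Finset.Icc_add_one_left_eq_Ioc]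
  -- per-term facts
  have key : ∀ i ∈ Finset.Icc 1 (n - 1),
      (0 ≤ (((n : ℝ) - (i : ℝ) + 1) / (n : ℝ)) *
          ((p i / P i) * Real.log ((p i / P i) / (s i / S i)) +
            (P (i + 1) / P i) * Real.log ((P (i + 1) / P i) / (S (i + 1) / S i)))) ∧
      ((((n : ℝ) - (i : ℝ) + 1) / (n : ℝ)) *
          ((p i / P i) * Real.log ((p i / P i) / (s i / S i)) +
            (P (i + 1) / P i) * Real.log ((P (i + 1) / P i) / (S (i + 1) / S i))) = 0 ↔
        p i / P i = s i / S i) := by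
    intro i hi
    simp only [Finset.mem_Icc] at hi
    have h1 : 1 ≤ i := hi.1
    have h2 : i ≤ n := by omega
    have h3 : i + 1 ≤ n := by omega
    have hPi := hPpos i h1 h2
    have hSi := hSpos i h1 h2
    have hPi1 := hPpos (i + 1) (by omega) h3
    have hSi1 := hSpos (i + 1) (by omega) h3
    have hpi : 0 < p i := hp i (by simp [Finset.mem_Icc]; omega)
    have hsi : 0 < s i := hs i (by simp [Finset.mem_Icc]; omega)
    have hsp : P i = p i + P (i + 1) := hsplit p i h2
    have hss : S i = s i + S (i + 1) := hsplit s i h2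
    set a := p i / P i with ha_def
    set b := s i / S i with hb_def
    have ha : 0 < a := div_pos hpi hPi
    have hb : 0 < b := div_pos hsi hSi
    have ha1 : a < 1 := (div_lt_one hPi).mpr (by linarith)
    have hb1 : b < 1 := (div_lt_one hSi).mpr (by linarith)
    have hta : P (i + 1) / P i = 1 - a := by
      rw [ha_def]; field_simp; linarith
    have htb : S (i + 1) / S i = 1 - b := by
      rw [hb_def]; field_simp; linarith
    rw [hta, htb]
    have hw : 0 < ((n : ℝ) - (i : ℝ) + 1) / (n : ℝ) := by
      have : (i : ℝ) ≤ (n : ℝ) := by exact_mod_cast h2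
      have hn0 : (0:ℝ) < n := by positivity
      exact div_pos (by linarith) hn0
    obtain ⟨hnn, hq⟩ := binKL a b ha ha1 hb hb1
    refine ⟨mul_nonneg hw.le hnn, ?_⟩
    rw [mul_eq_zero]
    constructor
    · rintro (h | h)
      · exact absurd h hw.ne'
      · exact hq.mp h
    · intro h; right; exact hq.mpr h
  constructor
  · exact Finset.sum_nonneg fun i hi => (key i hi).1
  · constructor
    · -- equality implies p = s
      intro h
      have hz := (Finset.sum_eq_zero_iff_of_nonneg fun i hi => (key i hi).1).mp h
      have hratio : ∀ i, 1 ≤ i → i ≤ n - 1 → p i / P i = s i / S i := by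
        intro i h1 h2
        exact (key i (by simp [Finset.mem_Icc]; omega)).2.mp
          (hz i (by simp [Finset.mem_Icc]; omega))
      -- tail equality
      have hPS : ∀ i, 1 ≤ i → i ≤ n → P i = S i := by
        intro i hi1
        induction i, hi1 using Nat.le_induction with
        | base => intro _; simp only [hP, hS]; rw [hp1, hs1]
        | succ i hi IH =>
          intro h2
          have hile : i ≤ n := by omega
          have hPSi : P i = S i := IH hile
          have hPi := hPpos i hi hile
          have hSi := hSpos i hi hile
          have hr := hratio i hi (by omega)
          have hsp : P i = p i + P (i + 1) := hsplit p i hile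
          have hss : S i = s i + S (i + 1) := hsplit s i hile
          have hpi : p i = s i := by
            have := hr
            rw [hPSi] at this
            field_simp at this
            exact this
          linarith
      intro i hi
      simp only [Finset.mem_Icc] at hi
      by_cases hin : i = n
      · have h1 : P n = p n := by
          simp only [hP]; rw [Finset.Icc_self, Finset.sum_singleton]
        have h2 : S n = s n := by
          simp only [hS]; rw [Finset.Icc_self, Finset.sum_singleton]
        have h3 := hPS n (by omega) le_rfl
        rw [hin]; linarith
      · have h2 : i + 1 ≤ n := by omega
        have hsp : P i = p i + P (i + 1) := hsplit p i hi.2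
        have hss : S i = s i + S (i + 1) := hsplit s i hi.2
        have e1 := hPS i hi.1 hi.2
        have e2 := hPS (i + 1) (by omega) h2
        linarith
    · -- p = s implies zero
      intro h
      apply Finset.sum_eq_zero
      intro i hi
      simp only [Finset.mem_Icc] at hi
      have h2 : i ≤ n := by omega
      have hPSeq : ∀ j, 1 ≤ j → P j = S j := by
        intro j hj
        exact Finset.sum_congr rfl fun k hk => h k (by
          simp only [Finset.mem_Icc] at hk ⊢; omega)
      have e1 := hPSeq i hi.1
      have e2 := hPSeq (i + 1) (by omega)
      have e3 := h i (by simp [Finset.mem_Icc]; omega)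
      show (((n : ℝ) - (i : ℝ) + 1) / (n : ℝ)) *
          ((p i / P i) * Real.log ((p i / P i) / (s i / S i)) +
            (P (i + 1) / P i) * Real.log ((P (i + 1) / P i) / (S (i + 1) / S i))) = 0
      rw [e1, e2, e3]
      have hPi := hSpos i hi.1 h2
      have hPi1 := hSpos (i + 1) (by omega) (by omega)
      have hsi : 0 < s i := hs i (by simp [Finset.mem_Icc]; omega)
      rw [div_self (by positivity), div_self (by positivity), Real.log_one]
      ring
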